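/- Let σ : [0,∞) → ℝ be continuous and satisfy 0 < σ̲ ≤ σ(x) ≤ σ̄ < ∞ for all x ≥ 0 and the Hölder condition |σ(e^x) − σ(e^y)| ≤ M|x − y|^α for all x, y ∈ ℝ (for some constants M, α > 0). Fix S₀ > 0, κ > 0 and τ ∈ (0,1). Then I_f(S₀, κ, τ) = inf over c ∈ ℝ of { (1/2)c²τ + (1/(1−τ)) · I_float(S₀ · exp(F⁻¹(cτ)), κ) }, where F : ℝ → ℝ is the strictly increasing bijection F(y) = ∫₀^y dz/σ(S₀ e^z). -/

import Mathlib

open MeasureTheory Set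
open intervalIntegral

/-- The energy `(1/2)∫₀¹ (f'(t)/σ(x·e^{f(t)}))² dt` of a path `f` (with derivative `g`)
in the local volatility model with volatility function `σ` and initial price `x`. -/
noncomputable def energyLV (σ : ℝ → ℝ) (x : ℝ) (f g : ℝ → ℝ) : ℝ :=
  (1 / 2) * ∫ t in (0:ℝ)..1, (g t / σ (x * Real.exp (f t))) ^ 2

/-- `IsACLV σ x f g` expresses that `f` is absolutely continuous on `[0,1]` with
`f 0 = 0`: `g` is its (integrable) derivative, the energy integrand is integrable,
and `f t = ∫₀ᵗ g(s) ds` on `[0,1]`. -/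
def IsACLV (σ : ℝ → ℝ) (x : ℝ) (f g : ℝ → ℝ) : Prop :=
  IntervalIntegrable g volume 0 1 ∧
  IntervalIntegrable (fun t => (g t / σ (x * Real.exp (f t))) ^ 2) volume 0 1 ∧
  ∀ t ∈ Icc (0:ℝ) 1, f t = ∫ s in (0:ℝ)..t, g s

/-- The rate function `I_f(S₀, κ, τ)` for a forward start floating-strike Asian option
in the local volatility model: the infimum of `(1/2)∫₀¹ (f'(t)/σ(S₀·e^{f(t)}))² dt`
over absolutely continuous `f` with `f(0) = 0` and
`(1/(1−τ))∫_τ¹ e^{f(t)} dt = κ·e^{f(1)}`. -/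
noncomputable def Ifloatfwd (σ : ℝ → ℝ) (S₀ κ τ : ℝ) : ℝ :=
  sInf { E | ∃ f g : ℝ → ℝ, IsACLV σ S₀ f g ∧
    (1 / (1 - τ)) * (∫ t in τ..1, Real.exp (f t)) = κ * Real.exp (f 1) ∧
    E = energyLV σ S₀ f g }

/-- The rate function `I_float(x, κ)` for a floating-strike Asian option with averaging
starting at time zero in the local volatility model: the infimum of
`(1/2)∫₀¹ (φ'(u)/σ(x·e^{φ(u)}))² du` over absolutely continuous `φ` with `φ(0) = 0`
and `∫₀¹ e^{φ(u)} du = κ·e^{φ(1)}`. -/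
noncomputable def Ifloat (σ : ℝ → ℝ) (x κ : ℝ) : ℝ :=
  sInf { E | ∃ φ g : ℝ → ℝ, IsACLV σ x φ g ∧
    (∫ u in (0:ℝ)..1, Real.exp (φ u)) = κ * Real.exp (φ 1) ∧
    E = energyLV σ x φ g }

lemma LV.cont {σ : ℝ → ℝ} (hcont : ContinuousOn σ (Ici 0)) {x : ℝ} (hx : 0 < x) :
    Continuous fun z : ℝ => σ (x * Real.exp z) := by
  rw [continuous_iff_continuousAt]
  intro z
  have h1 : (0:ℝ) < x * Real.exp z := by positivity
  exact ContinuousAt.comp (hcont.continuousAt (Ici_mem_nhds h1))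
    (Continuous.continuousAt (by continuity))

lemma LV.sq_integral_le {u : ℝ → ℝ} {τ : ℝ} (hτ : 0 < τ)
    (hu : IntervalIntegrable u volume 0 τ)
    (hu2 : IntervalIntegrable (fun t => (u t)^2) volume 0 τ) :
    (∫ t in (0:ℝ)..τ, u t)^2 ≤ τ * ∫ t in (0:ℝ)..τ, (u t)^2 := by
  set m : ℝ := (∫ t in (0:ℝ)..τ, u t) / τ with hm
  have h0 : (0:ℝ) ≤ ∫ t in (0:ℝ)..τ, (u t - m)^2 :=
    intervalIntegral.integral_nonneg hτ.le (fun t _ => sq_nonneg _)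
  have hexp : (∫ t in (0:ℝ)..τ, (u t - m)^2)
      = (∫ t in (0:ℝ)..τ, (u t)^2) - 2*m*(∫ t in (0:ℝ)..τ, u t) + m^2*τ := by
    have he : ∀ t, (u t - m)^2 = (u t)^2 - (2*m)*(u t) + m^2 := fun t => by ring
    simp_rw [he]
    rw [intervalIntegral.integral_add (hu2.sub (hu.const_mul (2*m))) intervalIntegrable_const,
      intervalIntegral.integral_sub hu2 (hu.const_mul (2*m)),
      intervalIntegral.integral_const_mul, intervalIntegral.integral_const]
    simp [smul_eq_mul]; ring
  rw [hexp] at h0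
  have hτ' : τ ≠ 0 := ne_of_gt hτ
  have : m * τ = ∫ t in (0:ℝ)..τ, u t := by rw [hm, div_mul_cancel₀ _ hτ']
  nlinarith [sq_nonneg m, hτ]

lemma LV.intaff1 (h : ℝ → ℝ) {τ : ℝ} (hτ : τ < 1) (t : ℝ) :
    ∫ s in τ..t, h ((s - τ)/(1-τ)) = (1-τ) * ∫ u in (0:ℝ)..((t-τ)/(1-τ)), h u := by
  have h1 : (1-τ) ≠ 0 := by linarith
  have hβ : (1-τ)⁻¹ ≠ 0 := inv_ne_zero h1
  have he : ∀ s : ℝ, (s - τ)/(1-τ) = (1-τ)⁻¹ * s + (-((1-τ)⁻¹ * τ)) := fun s => by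
    field_simp; ring
  simp_rw [he]
  rw [intervalIntegral.integral_comp_mul_add h hβ]
  have e1 : (1-τ)⁻¹ * τ + -((1-τ)⁻¹ * τ) = 0 := by ring
  have e2 : (1-τ)⁻¹ * t + -((1-τ)⁻¹ * τ) = (1-τ)⁻¹ * t + -((1-τ)⁻¹ * τ) := rfl
  rw [e1]
  have e3 : (1-τ)⁻¹ * t + -((1-τ)⁻¹ * τ) = (t - τ)/(1-τ) := by field_simp; ring
  rw [e3, smul_eq_mul, inv_inv]

lemma LV.intaff2 (h : ℝ → ℝ) {τ : ℝ} (hτ : τ < 1) (u : ℝ) :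
    ∫ s in (0:ℝ)..u, h (τ + (1-τ)*s) = (1-τ)⁻¹ * ∫ t in τ..(τ+(1-τ)*u), h t := by
  have h1 : (1-τ) ≠ 0 := by linarith
  have he : ∀ s : ℝ, τ + (1-τ)*s = (1-τ)*s + τ := fun s => by ring
  simp_rw [he]
  rw [intervalIntegral.integral_comp_mul_add h h1]
  rw [smul_eq_mul]
  norm_num

lemma LV.energy_nonneg (σ : ℝ → ℝ) (x : ℝ) (f g : ℝ → ℝ) : 0 ≤ energyLV σ x f g := by
  have : (0:ℝ) ≤ ∫ t in (0:ℝ)..1, (g t / σ (x * Real.exp (f t))) ^ 2 :=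
    intervalIntegral.integral_nonneg zero_le_one (fun t _ => sq_nonneg _)
  unfold energyLV; linarith

lemma LV.key_identity {g ψ : ℝ → ℝ} {τ C : ℝ} (hτ : 0 < τ) (hC : 0 < C)
    (hg : IntervalIntegrable g volume 0 τ)
    (hψ : Continuous ψ) (hCb : ∀ z, |ψ z| ≤ C)
    {F : ℝ → ℝ} (hF : ∀ y, F y = ∫ z in (0:ℝ)..y, ψ z) :
    ∫ s in (0:ℝ)..τ, ψ (∫ x in (0:ℝ)..s, g x) * g s = F (∫ x in (0:ℝ)..τ, g x) := by
  set f : ℝ → ℝ := fun t => ∫ x in (0:ℝ)..t, g x with hfdef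
  -- continuity and boundedness of f on [0,τ]
  have hgIcc : IntegrableOn g (Icc 0 τ) volume :=
    (intervalIntegrable_iff_integrableOn_Icc_of_le hτ.le).mp hg
  have hfc : ContinuousOn f (Icc 0 τ) := by
    have := intervalIntegral.continuousOn_primitive_interval
      (f := g) (μ := volume) (a := (0:ℝ)) (b := τ) (by rwa [uIcc_of_le hτ.le])
    rwa [uIcc_of_le hτ.le] at this
  obtain ⟨R, hR⟩ : ∃ R, ∀ t ∈ Icc (0:ℝ) τ, |f t| ≤ R := by
    obtain ⟨R, hR⟩ := isCompact_Icc.exists_bound_of_continuousOn hfc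
    exact ⟨R, fun t ht => by simpa [Real.norm_eq_abs] using hR t ht⟩
  have hR0 : 0 ≤ R := le_trans (abs_nonneg _) (hR 0 ⟨le_refl 0, hτ.le⟩)
  -- derivative of F
  have hFd : ∀ y : ℝ, HasDerivAt F (ψ y) y := by
    intro y
    have h1 : HasDerivAt (fun u => ∫ z in (0:ℝ)..u, ψ z) (ψ y) y :=
      (hψ.integral_hasStrictDerivAt 0 y).hasDerivAt
    have : F = fun u => ∫ z in (0:ℝ)..u, ψ z := funext hF
    rw [this]; exact h1
  have hF0 : F 0 = 0 := by rw [hF]; simp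
  -- Lipschitz property of F
  have hFlip : ∀ a b : ℝ, |F a - F b| ≤ C * |a - b| := by
    intro a b
    have h1 : F a - F b = ∫ z in b..a, ψ z := by
      rw [hF, hF]
      exact intervalIntegral.integral_interval_sub_left
        (hψ.intervalIntegrable _ _) (hψ.intervalIntegrable _ _)
    rw [h1]
    have := intervalIntegral.norm_integral_le_of_norm_le_const
      (a := b) (b := a) (C := C) (f := ψ) (fun x _ => by
        rw [Real.norm_eq_abs]; exact hCb x)
    rw [Real.norm_eq_abs] at this
    exact this
  -- main ε-argument
  have key : ∀ ε : ℝ, 0 < ε →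
      |(∫ s in (0:ℝ)..τ, ψ (f s) * g s) - F (f τ)| ≤ ε := by
    intro ε hε
    set Gval : ℝ := ∫ s in (0:ℝ)..τ, |g s| with hGdef
    have hGnn : 0 ≤ Gval := intervalIntegral.integral_nonneg hτ.le (fun s _ => abs_nonneg _)
    set ε₁ : ℝ := ε / (2 * (Gval + 1)) with hε₁def
    have hε₁ : 0 < ε₁ := by positivity
    -- uniform continuity of ψ on K
    have hK : IsCompact (Icc (-(R+1)) (R+1)) := isCompact_Icc
    have hucont : UniformContinuousOn ψ (Icc (-(R+1)) (R+1)) :=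
      hK.uniformContinuousOn_of_continuous hψ.continuousOn
    rw [Metric.uniformContinuousOn_iff] at hucont
    obtain ⟨δ₁, hδ₁, hδ₁p⟩ := hucont ε₁ hε₁
    set δ₂ : ℝ := min (min (δ₁/2) 1) (ε/(4*(C+1))) with hδ₂def
    have hδ₂ : 0 < δ₂ := by
      apply lt_min (lt_min (by linarith) one_pos); positivity
    -- approximate g by a continuous function
    set g₀ : ℝ → ℝ := (Icc (0:ℝ) τ).indicator g with hg₀def
    have hg₀int : Integrable g₀ volume := hgIcc.integrable_indicator measurableSet_Icc
    obtain ⟨gt, gtsupp, hD, gtcont, gtint⟩ :=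
      hg₀int.exists_hasCompactSupport_integral_sub_le hδ₂
    set ft : ℝ → ℝ := fun t => ∫ x in (0:ℝ)..t, gt x with hftdef
    have hftd : ∀ t : ℝ, HasDerivAt ft (gt t) t :=
      fun t => (gtcont.integral_hasStrictDerivAt 0 t).hasDerivAt
    have hftcont : Continuous ft := gtint.continuous_primitive 0
    -- exact identity for the smooth approximation
    have hexact : ∫ s in (0:ℝ)..τ, ψ (ft s) * gt s = F (ft τ) := by
      have hcomp : ∀ t : ℝ, HasDerivAt (fun u => F (ft u)) (ψ (ft t) * gt t) t := by
        intro t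
        exact (hFd (ft t)).comp t (hftd t)
      have hci : IntervalIntegrable (fun s => ψ (ft s) * gt s) volume 0 τ :=
        ((hψ.comp hftcont).mul gtcont).intervalIntegrable _ _
      have := intervalIntegral.integral_eq_sub_of_hasDerivAt
        (f := fun u => F (ft u)) (fun t _ => hcomp t) hci
      rw [this]
      show F (ft τ) - F (ft 0) = F (ft τ)
      have hft0 : ft 0 = 0 := by simp [hftdef]
      rw [hft0, hF0, sub_zero]
    -- distance between f and ft on [0,τ]
    have hDist : ∀ t ∈ Icc (0:ℝ) τ, |f t - ft t| ≤ δ₂ := by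
      intro t ht
      have hfg₀ : f t = ∫ x in (0:ℝ)..t, g₀ x := by
        apply intervalIntegral.integral_congr
        intro s hs
        rw [uIcc_of_le ht.1] at hs
        have : s ∈ Icc (0:ℝ) τ := ⟨hs.1, le_trans hs.2 ht.2⟩
        simp [hg₀def, Set.indicator_of_mem this]
      have hsub : f t - ft t = ∫ x in (0:ℝ)..t, (g₀ x - gt x) := by
        rw [hfg₀, hftdef]
        exact (intervalIntegral.integral_sub (hg₀int.intervalIntegrable)
          (gtint.intervalIntegrable)).symm
      rw [hsub]
      have h1 : |∫ x in (0:ℝ)..t, (g₀ x - gt x)| ≤ ∫ x in (0:ℝ)..t, |g₀ x - gt x| :=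
        intervalIntegral.abs_integral_le_integral_abs ht.1
      have h2 : (∫ x in (0:ℝ)..t, |g₀ x - gt x|) ≤ ∫ x : ℝ, |g₀ x - gt x| := by
        rw [intervalIntegral.integral_of_le ht.1]
        exact setIntegral_le_integral ((hg₀int.sub gtint).abs)
          (Filter.Eventually.of_forall (fun x => abs_nonneg _))
      have h3 : (∫ x : ℝ, |g₀ x - gt x|) ≤ δ₂ := by
        calc (∫ x : ℝ, |g₀ x - gt x|) = ∫ x : ℝ, ‖g₀ x - gt x‖ := by
              simp [Real.norm_eq_abs]
          _ ≤ δ₂ := hD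
      linarith
    have hfτmem : τ ∈ Icc (0:ℝ) τ := ⟨hτ.le, le_refl τ⟩
    -- |F (f τ) - F (ft τ)| ≤ C δ₂
    have hRbound : |F (f τ) - F (ft τ)| ≤ C * δ₂ := by
      have := hFlip (f τ) (ft τ)
      have h2 := hDist τ hfτmem
      nlinarith [abs_nonneg (f τ - ft τ)]
    -- pointwise bound on the integrand difference
    have hptwise : ∀ s ∈ Set.uIoc (0:ℝ) τ,
        |ψ (f s) * g s - ψ (ft s) * gt s| ≤ ε₁ * |g s| + C * |g₀ s - gt s| := by
      intro s hs
      rw [uIoc_of_le hτ.le] at hs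
      have hsIcc : s ∈ Icc (0:ℝ) τ := ⟨hs.1.le, hs.2⟩
      have hfs : |f s| ≤ R := hR s hsIcc
      have hdist : |f s - ft s| ≤ δ₂ := hDist s hsIcc
      have hδ₂1 : δ₂ ≤ 1 := le_trans (min_le_left _ _) (min_le_right _ _)
      have hδ₂δ₁ : δ₂ ≤ δ₁/2 := le_trans (min_le_left _ _) (min_le_left _ _)
      have hfsK : f s ∈ Icc (-(R+1)) (R+1) := by
        constructor <;> [linarith [abs_le.mp hfs]; linarith [abs_le.mp hfs]]
      have hftsK : ft s ∈ Icc (-(R+1)) (R+1) := by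
        have h1 := abs_le.mp hfs
        have h2 := abs_le.mp hdist
        constructor <;> [linarith; linarith]
      have hψdiff : |ψ (f s) - ψ (ft s)| ≤ ε₁ := by
        have hlt : dist (f s) (ft s) < δ₁ := by
          rw [Real.dist_eq]; linarith
        have := hδ₁p (f s) hfsK (ft s) hftsK hlt
        rw [Real.dist_eq] at this
        exact this.le
      have hg₀s : g₀ s = g s := Set.indicator_of_mem hsIcc g
      have hdecomp : ψ (f s) * g s - ψ (ft s) * gt s
          = (ψ (f s) - ψ (ft s)) * g s + ψ (ft s) * (g s - gt s) := by ring
      rw [hdecomp]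
      calc |(ψ (f s) - ψ (ft s)) * g s + ψ (ft s) * (g s - gt s)|
          ≤ |(ψ (f s) - ψ (ft s)) * g s| + |ψ (ft s) * (g s - gt s)| := abs_add_le _ _
        _ = |ψ (f s) - ψ (ft s)| * |g s| + |ψ (ft s)| * |g s - gt s| := by
            rw [abs_mul, abs_mul]
        _ ≤ ε₁ * |g s| + C * |g₀ s - gt s| := by
            rw [hg₀s]
            have h1 : |ψ (f s) - ψ (ft s)| * |g s| ≤ ε₁ * |g s| :=
              mul_le_mul_of_nonneg_right hψdiff (abs_nonneg _)
            have h2 : |ψ (ft s)| * |g s - gt s| ≤ C * |g s - gt s| :=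
              mul_le_mul_of_nonneg_right (hCb _) (abs_nonneg _)
            linarith
    -- integrability facts
    have hfcu : ContinuousOn f (Set.uIcc (0:ℝ) τ) := by rwa [Set.uIcc_of_le hτ.le]
    have hψf : IntervalIntegrable (fun s => ψ (f s) * g s) volume 0 τ := by
      have := hg.continuousOn_mul (g := fun s => ψ (f s)) (hψ.comp_continuousOn hfcu)
      exact this
    have hψft : IntervalIntegrable (fun s => ψ (ft s) * gt s) volume 0 τ :=
      ((hψ.comp hftcont).mul gtcont).intervalIntegrable _ _
    have hgabs : IntervalIntegrable (fun s => |g s|) volume 0 τ := hg.abs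
    have hg₀gt : IntervalIntegrable (fun s => |g₀ s - gt s|) volume 0 τ :=
      ((hg₀int.sub gtint).abs).intervalIntegrable
    have hbint : IntervalIntegrable (fun s => ε₁ * |g s| + C * |g₀ s - gt s|) volume 0 τ :=
      (hgabs.const_mul ε₁).add (hg₀gt.const_mul C)
    -- bound |L - L̃|
    have hLdiff : |(∫ s in (0:ℝ)..τ, ψ (f s) * g s) - ∫ s in (0:ℝ)..τ, ψ (ft s) * gt s|
        ≤ ε₁ * Gval + C * δ₂ := by
      have hsub : (∫ s in (0:ℝ)..τ, ψ (f s) * g s) - (∫ s in (0:ℝ)..τ, ψ (ft s) * gt s)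
          = ∫ s in (0:ℝ)..τ, (ψ (f s) * g s - ψ (ft s) * gt s) :=
        (intervalIntegral.integral_sub hψf hψft).symm
      rw [hsub]
      have h1 : ‖∫ s in (0:ℝ)..τ, (ψ (f s) * g s - ψ (ft s) * gt s)‖
          ≤ |∫ s in (0:ℝ)..τ, (ε₁ * |g s| + C * |g₀ s - gt s|)| := by
        refine le_trans (intervalIntegral.norm_integral_le_of_norm_le hτ.le ?_ hbint) (le_abs_self _)
        apply Filter.Eventually.of_forall
        intro s hs
        rw [Real.norm_eq_abs]
        exact hptwise s (by rwa [uIoc_of_le hτ.le])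
      rw [Real.norm_eq_abs] at h1
      have h2 : (∫ s in (0:ℝ)..τ, (ε₁ * |g s| + C * |g₀ s - gt s|))
          = ε₁ * Gval + C * ∫ s in (0:ℝ)..τ, |g₀ s - gt s| := by
        rw [intervalIntegral.integral_add (hgabs.const_mul ε₁) (hg₀gt.const_mul C),
          intervalIntegral.integral_const_mul, intervalIntegral.integral_const_mul]
      have h3 : (∫ s in (0:ℝ)..τ, |g₀ s - gt s|) ≤ δ₂ := by
        have ha : (∫ s in (0:ℝ)..τ, |g₀ s - gt s|) ≤ ∫ x : ℝ, |g₀ x - gt x| := by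
          rw [intervalIntegral.integral_of_le hτ.le]
          exact setIntegral_le_integral ((hg₀int.sub gtint).abs)
            (Filter.Eventually.of_forall (fun x => abs_nonneg _))
        have hb : (∫ x : ℝ, |g₀ x - gt x|) ≤ δ₂ := by
          calc (∫ x : ℝ, |g₀ x - gt x|) = ∫ x : ℝ, ‖g₀ x - gt x‖ := by
                simp [Real.norm_eq_abs]
            _ ≤ δ₂ := hD
        linarith
      set J : ℝ := ∫ s in (0:ℝ)..τ, |g₀ s - gt s| with hJdef
      have h4 : (0:ℝ) ≤ J :=
        intervalIntegral.integral_nonneg hτ.le (fun s _ => abs_nonneg _)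
      have h5 : |ε₁ * Gval + C * J| = ε₁ * Gval + C * J := by
        apply abs_of_nonneg
        have := mul_nonneg hε₁.le hGnn
        nlinarith
      rw [h2, h5] at h1
      nlinarith
    -- combine
    have hfinal : |(∫ s in (0:ℝ)..τ, ψ (f s) * g s) - F (f τ)|
        ≤ ε₁ * Gval + C * δ₂ + C * δ₂ := by
      have hRbound' : |(∫ s in (0:ℝ)..τ, ψ (ft s) * gt s) - F (f τ)| ≤ C * δ₂ := by
        rw [hexact, abs_sub_comm]
        exact hRbound
      have htri : |(∫ s in (0:ℝ)..τ, ψ (f s) * g s) - F (f τ)|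
          ≤ |(∫ s in (0:ℝ)..τ, ψ (f s) * g s) - ∫ s in (0:ℝ)..τ, ψ (ft s) * gt s|
            + |(∫ s in (0:ℝ)..τ, ψ (ft s) * gt s) - F (f τ)| :=
        abs_sub_le _ _ _
      linarith
    have he1 : ε₁ * Gval ≤ ε / 2 := by
      rw [hε₁def]
      rw [div_mul_eq_mul_div, div_le_div_iff₀ (by positivity) (by norm_num)]
      nlinarith
    have he2 : C * δ₂ + C * δ₂ ≤ ε / 2 := by
      have hd : δ₂ ≤ ε/(4*(C+1)) := min_le_right _ _
      have : C * δ₂ ≤ C * (ε/(4*(C+1))) := mul_le_mul_of_nonneg_left hd hC.le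
      have h2 : C * (ε/(4*(C+1))) ≤ ε/4 := by
        rw [mul_div_assoc']
        rw [div_le_div_iff₀ (by positivity) (by norm_num)]
        nlinarith
      linarith
    linarith
  -- conclude equality
  by_contra hne
  have habs : 0 < |(∫ s in (0:ℝ)..τ, ψ (f s) * g s) - F (f τ)| := by
    rw [abs_pos, sub_ne_zero]
    exact hne
  have := key (|(∫ s in (0:ℝ)..τ, ψ (f s) * g s) - F (f τ)| / 2) (by linarith)
  linarith

noncomputable def Ifloat' (σ : ℝ → ℝ) (x κ : ℝ) : Set ℝ :=
  { E | ∃ φ g : ℝ → ℝ, IsACLV σ x φ g ∧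
    (∫ u in (0:ℝ)..1, Real.exp (φ u)) = κ * Real.exp (φ 1) ∧
    E = energyLV σ x φ g }

lemma LV.exists_linear_constraint {κ : ℝ} (hκ : 0 < κ) :
    ∃ a : ℝ, (∫ u in (0:ℝ)..1, Real.exp (a * u)) = κ * Real.exp a := by
  have hint : ∀ a : ℝ, a ≠ 0 → (∫ u in (0:ℝ)..1, Real.exp (a * u)) = a⁻¹ * (Real.exp a - 1) := by
    intro a ha
    rw [intervalIntegral.integral_comp_mul_left Real.exp ha]
    simp [Real.exp_zero, smul_eq_mul]
  rcases lt_trichotomy κ 1 with hκ1 | hκ1 | hκ1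
  · -- κ < 1 : choose a > 0 with (1 - exp (-a))/a = κ
    set G : ℝ → ℝ := fun a => (1 - Real.exp (-a)) / a with hGdef
    have h2 : (1:ℝ) < 2/(1+κ) := by
      rw [lt_div_iff₀ (by linarith)]; linarith
    set a₀ : ℝ := Real.log (2/(1+κ)) with ha₀def
    have ha₀ : 0 < a₀ := Real.log_pos h2
    have hexpa₀ : Real.exp (-a₀) = (1+κ)/2 := by
      rw [Real.exp_neg, ha₀def, Real.exp_log (by linarith)]
      rw [inv_div]
    set a₁ : ℝ := a₀ + 1/κ with ha₁def
    have hoκ : 0 < 1/κ := by positivity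
    have ha₁ : a₀ ≤ a₁ := by rw [ha₁def]; linarith
    have ha₁0 : 0 < a₁ := by positivity
    have hGa₀ : κ ≤ G a₀ := by
      have hexp : a₀ + 1 ≤ Real.exp a₀ := Real.add_one_le_exp a₀
      have he : Real.exp a₀ * Real.exp (-a₀) = 1 := by
        rw [← Real.exp_add]; simp
      have h1 : a₀ * Real.exp (-a₀) ≤ 1 - Real.exp (-a₀) := by
        nlinarith [Real.exp_pos (-a₀)]
      have h2' : Real.exp (-a₀) ≤ G a₀ := by
        rw [hGdef]
        rw [le_div_iff₀ ha₀]
        nlinarith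
      rw [hexpa₀] at h2'
      linarith
    have hGa₁ : G a₁ ≤ κ := by
      have h1 : G a₁ ≤ 1/a₁ := by
        rw [hGdef, div_le_div_iff₀ ha₁0 ha₁0]
        nlinarith [Real.exp_pos (-a₁)]
      have h2' : 1/a₁ ≤ κ := by
        rw [div_le_iff₀ ha₁0]
        rw [ha₁def]
        have : 1/κ * κ = 1 := by field_simp
        nlinarith
      linarith
    have hGcont : ContinuousOn G (Icc a₀ a₁) := by
      apply ContinuousOn.div
      · exact (continuous_const.sub (Real.continuous_exp.comp continuous_neg)).continuousOn
      · exact continuousOn_id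
      · intro a ha
        exact ne_of_gt (lt_of_lt_of_le ha₀ ha.1)
    have := intermediate_value_Icc' ha₁ hGcont
    have hmem : κ ∈ Icc (G a₁) (G a₀) := ⟨hGa₁, hGa₀⟩
    obtain ⟨a, haI, haG⟩ := this hmem
    have ha : 0 < a := lt_of_lt_of_le ha₀ haI.1
    refine ⟨a, ?_⟩
    rw [hint a (ne_of_gt ha)]
    have hG : (1 - Real.exp (-a)) / a = κ := haG
    have he : Real.exp a * Real.exp (-a) = 1 := by rw [← Real.exp_add]; simp
    have hepos := Real.exp_pos a
    field_simp at hG ⊢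
    nlinarith
  · exact ⟨0, by simp [hκ1]⟩
  · -- κ > 1 : choose b > 0 with (exp b - 1)/b = κ, take a = -b
    set H : ℝ → ℝ := fun b => (Real.exp b - 1) / b with hHdef
    have h2 : (1:ℝ) < (1+κ)/2 := by linarith
    set b₀ : ℝ := Real.log ((1+κ)/2) with hb₀def
    have hb₀ : 0 < b₀ := Real.log_pos h2
    have hexpb₀ : Real.exp b₀ = (1+κ)/2 := Real.exp_log (by linarith)
    set b₁ : ℝ := b₀ + 4*κ with hb₁def
    have hb₁ : b₀ ≤ b₁ := by linarith
    have hb₁0 : 0 < b₁ := by linarith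
    have hHb₀ : H b₀ ≤ κ := by
      have hexp : (-b₀) + 1 ≤ Real.exp (-b₀) := Real.add_one_le_exp (-b₀)
      have he : Real.exp b₀ * Real.exp (-b₀) = 1 := by rw [← Real.exp_add]; simp
      have h1 : H b₀ ≤ Real.exp b₀ := by
        rw [hHdef, div_le_iff₀ hb₀]
        nlinarith [Real.exp_pos b₀]
      rw [hexpb₀] at h1
      linarith
    have hHb₁ : κ ≤ H b₁ := by
      have hsq : Real.exp b₁ = Real.exp (b₁/2) * Real.exp (b₁/2) := by
        rw [← Real.exp_add]; ring_nf
      have hexp : b₁/2 + 1 ≤ Real.exp (b₁/2) := Real.add_one_le_exp (b₁/2)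
      have h1 : (b₁/2 + 1)^2 ≤ Real.exp b₁ := by
        rw [hsq]
        nlinarith
      rw [hHdef, le_div_iff₀ hb₁0]
      nlinarith
    have hHcont : ContinuousOn H (Icc b₀ b₁) := by
      apply ContinuousOn.div
      · exact (Real.continuous_exp.sub continuous_const).continuousOn
      · exact continuousOn_id
      · intro b hb
        exact ne_of_gt (lt_of_lt_of_le hb₀ hb.1)
    have := intermediate_value_Icc hb₁ hHcont
    obtain ⟨b, hbI, hbH⟩ := this ⟨hHb₀, hHb₁⟩
    have hb : 0 < b := lt_of_lt_of_le hb₀ hbI.1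
    refine ⟨-b, ?_⟩
    rw [hint (-b) (by simpa using ne_of_gt hb)]
    have hH : (Real.exp b - 1) / b = κ := hbH
    have he : Real.exp b * Real.exp (-b) = 1 := by rw [← Real.exp_add]; simp
    have hepos := Real.exp_pos b
    have heneg := Real.exp_pos (-b)
    have hH' : Real.exp b - 1 = κ * b := by
      field_simp at hH
      linarith
    rw [inv_mul_eq_div, div_eq_iff (neg_ne_zero.2 (ne_of_gt hb))]
    linear_combination (-(Real.exp (-b))) * hH' + he

lemma LV.linear_mem {σ : ℝ → ℝ} {σlo : ℝ} (hcont : ContinuousOn σ (Ici 0))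
    (hσlo : 0 < σlo) (hbdd : ∀ x : ℝ, 0 ≤ x → σlo ≤ σ x)
    {x κ : ℝ} (hx : 0 < x) (hκ : 0 < κ) :
    (Ifloat' σ x κ).Nonempty := by
  obtain ⟨a, ha⟩ := LV.exists_linear_constraint hκ
  refine ⟨energyLV σ x (fun u => a * u) (fun _ => a), fun u => a * u, fun _ => a, ?_, ?_, rfl⟩
  · refine ⟨intervalIntegrable_const, ?_, ?_⟩
    · apply Continuous.intervalIntegrable
      apply Continuous.pow
      apply Continuous.div continuous_const
      · exact (LV.cont hcont hx).comp (continuous_const.mul continuous_id)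
      · intro t
        have : (0:ℝ) < x * Real.exp (a * t) := by positivity
        exact ne_of_gt (lt_of_lt_of_le hσlo (hbdd _ this.le))
    · intro t _
      simp [smul_eq_mul, mul_comm]
  · simpa using ha

lemma LV.II_affine1 {h : ℝ → ℝ} {τ : ℝ} (hτ1 : τ < 1)
    (hh : IntervalIntegrable h volume 0 1) :
    IntervalIntegrable (fun t => h ((t - τ) / (1 - τ))) volume τ 1 := by
  have h1 : (1 - τ) ≠ 0 := by linarith
  have step1 := hh.comp_mul_left (c := (1 - τ)⁻¹)
  rw [show (0:ℝ) / (1 - τ)⁻¹ = 0 by simp, show (1:ℝ) / (1 - τ)⁻¹ = 1 - τ by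
    rw [one_div, inv_inv]] at step1
  have step2 := step1.comp_sub_right τ
  rw [zero_add, sub_add_cancel] at step2
  have : (fun x => h ((1 - τ)⁻¹ * (x - τ))) = fun t => h ((t - τ) / (1 - τ)) := by
    funext t; rw [inv_mul_eq_div]
  rwa [this] at step2

lemma LV.II_affine2 {h : ℝ → ℝ} {τ : ℝ} (hτ1 : τ < 1)
    (hh : IntervalIntegrable h volume τ 1) :
    IntervalIntegrable (fun u => h (τ + (1 - τ) * u)) volume 0 1 := by
  have h1 : (1 - τ) ≠ 0 := by linarith
  have step1 := hh.comp_add_left τ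
  rw [sub_self] at step1
  have step2 := step1.comp_mul_left (c := (1 - τ))
  rw [zero_div, div_self h1] at step2
  exact step2

lemma LV.construct_mem
    {σ : ℝ → ℝ} {σlo σhi : ℝ}
    (hcont : ContinuousOn σ (Ici 0)) (hσlo : 0 < σlo)
    (hbdd : ∀ x : ℝ, 0 ≤ x → σlo ≤ σ x ∧ σ x ≤ σhi)
    {S₀ κ τ : ℝ} (hS₀ : 0 < S₀) (hκ : 0 < κ) (hτ : τ ∈ Ioo (0:ℝ) 1)
    (F Finv : ℝ → ℝ)
    (hF : ∀ y : ℝ, F y = ∫ z in (0:ℝ)..y, 1 / σ (S₀ * Real.exp z))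
    (hFmono : StrictMono F)
    (hLeft : Function.LeftInverse Finv F)
    (hRight : Function.RightInverse Finv F)
    (c : ℝ) {φ gφ : ℝ → ℝ}
    (hφ : IsACLV σ (S₀ * Real.exp (Finv (c * τ))) φ gφ)
    (hcons : (∫ u in (0:ℝ)..1, Real.exp (φ u)) = κ * Real.exp (φ 1)) :
    ((1/2) * c^2 * τ + (1/(1-τ)) * energyLV σ (S₀ * Real.exp (Finv (c * τ))) φ gφ) ∈
      { E | ∃ f g : ℝ → ℝ, IsACLV σ S₀ f g ∧
        (1 / (1 - τ)) * (∫ t in τ..1, Real.exp (f t)) = κ * Real.exp (f 1) ∧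
        E = energyLV σ S₀ f g } := by
  obtain ⟨hτ0, hτ1⟩ := hτ
  have h1τ : (0:ℝ) < 1 - τ := by linarith
  have h1τ' : (1:ℝ) - τ ≠ 0 := ne_of_gt h1τ
  set ν : ℝ → ℝ := fun z => σ (S₀ * Real.exp z) with hνdef
  have hνcont : Continuous ν := LV.cont hcont hS₀
  have hνpos : ∀ z, 0 < ν z := fun z =>
    lt_of_lt_of_le hσlo (hbdd _ (by positivity)).1
  have hψcont : Continuous fun z => 1 / ν z :=
    continuous_const.div hνcont fun z => (hνpos z).ne'
  have hFd : ∀ y : ℝ, HasDerivAt F (1 / ν y) y := by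
    intro y
    have h1 : HasDerivAt (fun u => ∫ z in (0:ℝ)..u, 1 / ν z) (1 / ν y) y :=
      (hψcont.integral_hasStrictDerivAt 0 y).hasDerivAt
    have : F = fun u => ∫ z in (0:ℝ)..u, 1 / ν z := funext hF
    rw [this]; exact h1
  have hsurj : Function.Surjective F := hRight.surjective
  have hFinveq : Finv = ⇑(StrictMono.orderIsoOfSurjective F hFmono hsurj).symm := by
    funext u
    apply hFmono.injective
    rw [hRight u]
    exact StrictMono.orderIsoOfSurjective_self_symm_apply F hFmono hsurj u |>.symm
  have hFinvcont : Continuous Finv := by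
    rw [hFinveq]; exact OrderIso.continuous _
  have hFinvd : ∀ u, HasDerivAt Finv (ν (Finv u)) u := by
    intro u
    have h := HasDerivAt.of_local_left_inverse (hFinvcont.continuousAt)
      (hFd (Finv u)) (one_div_pos.mpr (hνpos (Finv u))).ne'
      (Filter.Eventually.of_forall hRight)
    rwa [one_div, inv_inv] at h
  have hF0 : F 0 = 0 := by rw [hF]; simp
  have hFinv0 : Finv 0 = 0 := by
    conv_lhs => rw [← hF0]
    exact hLeft 0
  set q : ℝ → ℝ := fun s => c * ν (Finv (c * s)) with hqdef
  have hqcont : Continuous q :=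
    continuous_const.mul (hνcont.comp (hFinvcont.comp (continuous_const.mul continuous_id)))
  have hprim : ∀ t : ℝ, Finv (c * t) = ∫ s in (0:ℝ)..t, q s := by
    intro t
    have hd : ∀ s ∈ uIcc (0:ℝ) t, HasDerivAt (fun u => Finv (c * u)) (q s) s := by
      intro s _
      have h1 : HasDerivAt (fun u : ℝ => c * u) c s := by
        simpa using (hasDerivAt_id s).const_mul c
      have := (hFinvd (c * s)).comp s h1
      have e : q s = ν (Finv (c * s)) * c := by simp only [hqdef]; ring
      rw [e]; exact this
    have := intervalIntegral.integral_eq_sub_of_hasDerivAt hd (hqcont.intervalIntegrable 0 t)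
    rw [this, mul_zero, hFinv0, sub_zero]
  set x : ℝ := S₀ * Real.exp (Finv (c * τ)) with hxdef
  set f : ℝ → ℝ := fun t => if t ≤ τ then Finv (c * t)
    else Finv (c * τ) + φ ((t - τ) / (1 - τ)) with hfdef
  set g : ℝ → ℝ := fun t => if t ≤ τ then q t
    else gφ ((t - τ) / (1 - τ)) / (1 - τ) with hgdef
  -- integrability of g on the two pieces
  have hgleft : IntervalIntegrable g volume 0 τ := by
    rw [intervalIntegrable_iff_integrableOn_Ioc_of_le hτ0.le]
    have hq : IntegrableOn q (Ioc 0 τ) volume := by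
      rw [← intervalIntegrable_iff_integrableOn_Ioc_of_le hτ0.le]
      exact hqcont.intervalIntegrable 0 τ
    apply hq.congr
    apply (ae_restrict_iff' measurableSet_Ioc).mpr
    apply Filter.Eventually.of_forall
    intro s hs
    simp [hgdef, hs.2]
  have hgright : IntervalIntegrable g volume τ 1 := by
    rw [intervalIntegrable_iff_integrableOn_Ioc_of_le hτ1.le]
    have hb : IntegrableOn (fun t => gφ ((t - τ) / (1 - τ)) / (1 - τ)) (Ioc τ 1) volume := by
      rw [← intervalIntegrable_iff_integrableOn_Ioc_of_le hτ1.le]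
      exact (LV.II_affine1 hτ1 hφ.1).div_const (1 - τ)
    apply hb.congr
    apply (ae_restrict_iff' measurableSet_Ioc).mpr
    apply Filter.Eventually.of_forall
    intro s hs
    simp [hgdef, not_le.mpr hs.1]
  -- pointwise identities
  have hfleft : ∀ s : ℝ, s ≤ τ → (g s / σ (S₀ * Real.exp (f s)))^2 = c^2 := by
    intro s hsle
    have hgs : g s = c * ν (Finv (c * s)) := by simp [hgdef, hqdef, hsle]
    have hfs : f s = Finv (c * s) := by simp [hfdef, hsle]
    rw [hgs, hfs]
    show (c * ν (Finv (c * s)) / ν (Finv (c * s)))^2 = c^2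
    rw [mul_div_assoc, div_self (hνpos _).ne', mul_one]
  have hfright : ∀ s : ℝ, ¬ (s ≤ τ) → (g s / σ (S₀ * Real.exp (f s)))^2
      = (gφ ((s - τ)/(1 - τ)) / σ (x * Real.exp (φ ((s - τ)/(1 - τ)))))^2 / (1 - τ)^2 := by
    intro s hsgt
    have hgs : g s = gφ ((s - τ)/(1 - τ)) / (1 - τ) := by simp [hgdef, hsgt]
    have hfs : f s = Finv (c * τ) + φ ((s - τ)/(1 - τ)) := by simp [hfdef, hsgt]
    have hxe : S₀ * Real.exp (f s) = x * Real.exp (φ ((s - τ)/(1 - τ))) := by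
      rw [hfs, hxdef, Real.exp_add]; ring
    rw [hgs, hxe]
    generalize gφ ((s - τ)/(1 - τ)) = A
    generalize σ (x * Real.exp (φ ((s - τ)/(1 - τ)))) = d
    field_simp
  -- integrability of the square integrand
  have hQl : IntervalIntegrable (fun t => (g t / σ (S₀ * Real.exp (f t)))^2) volume 0 τ := by
    rw [intervalIntegrable_iff_integrableOn_Ioc_of_le hτ0.le]
    have hb : IntegrableOn (fun _ : ℝ => c^2) (Ioc 0 τ) volume :=
      integrableOn_const measure_Ioc_lt_top.ne
    apply hb.congr
    apply (ae_restrict_iff' measurableSet_Ioc).mpr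
    apply Filter.Eventually.of_forall
    intro s hs
    exact (hfleft s hs.2).symm
  have hQr : IntervalIntegrable (fun t => (g t / σ (S₀ * Real.exp (f t)))^2) volume τ 1 := by
    rw [intervalIntegrable_iff_integrableOn_Ioc_of_le hτ1.le]
    have hb : IntegrableOn (fun t =>
        (gφ ((t - τ)/(1 - τ)) / σ (x * Real.exp (φ ((t - τ)/(1 - τ)))))^2 / (1 - τ)^2)
        (Ioc τ 1) volume := by
      rw [← intervalIntegrable_iff_integrableOn_Ioc_of_le hτ1.le]
      exact (LV.II_affine1 hτ1 hφ.2.1).div_const ((1 - τ)^2)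
    apply hb.congr
    apply (ae_restrict_iff' measurableSet_Ioc).mpr
    apply Filter.Eventually.of_forall
    intro s hs
    exact (hfright s (not_le.mpr hs.1)).symm
  -- integrals of g over the pieces
  have hintgτ : ∀ t : ℝ, 0 ≤ t → t ≤ τ → (∫ s in (0:ℝ)..t, g s) = Finv (c * t) := by
    intro t ht0 htτ
    have h1 : (∫ s in (0:ℝ)..t, g s) = ∫ s in (0:ℝ)..t, q s := by
      apply intervalIntegral.integral_congr
      intro s hs
      rw [uIcc_of_le ht0] at hs
      simp [hgdef, le_trans hs.2 htτ]
    rw [h1, ← hprim t]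
  have hintgright : ∀ t : ℝ, τ < t → t ≤ 1 →
      (∫ s in τ..t, g s) = φ ((t - τ)/(1 - τ)) := by
    intro t hτt ht1
    have h1 : (∫ s in τ..t, g s) = ∫ s in τ..t, gφ ((s - τ)/(1 - τ)) / (1 - τ) := by
      apply intervalIntegral.integral_congr_ae
      apply Filter.Eventually.of_forall
      intro s hs
      rw [uIoc_of_le hτt.le] at hs
      simp [hgdef, not_le.mpr hs.1]
    have hmem : (t - τ)/(1 - τ) ∈ Icc (0:ℝ) 1 := by
      constructor
      · exact div_nonneg (by linarith) h1τ.le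
      · rw [div_le_one h1τ]; linarith
    rw [h1, intervalIntegral.integral_div, LV.intaff1 gφ hτ1 t, ← hφ.2.2 _ hmem]
    field_simp
  refine ⟨f, g, ⟨hgleft.trans hgright, hQl.trans hQr, ?_⟩, ?_, ?_⟩
  · -- f t = ∫₀ᵗ g
    intro t ht
    by_cases hcase : t ≤ τ
    · have : f t = Finv (c * t) := by simp [hfdef, hcase]
      rw [this, hintgτ t ht.1 hcase]
    · have hft : f t = Finv (c * τ) + φ ((t - τ)/(1 - τ)) := by simp [hfdef, hcase]
      have hsplit : (∫ s in (0:ℝ)..t, g s) = (∫ s in (0:ℝ)..τ, g s) + ∫ s in τ..t, g s :=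
        (intervalIntegral.integral_add_adjacent_intervals hgleft
          (hgright.mono_set (by
            rw [uIcc_of_le hτ1.le, uIcc_of_le (le_of_lt (not_le.mp hcase))]
            exact Icc_subset_Icc le_rfl ht.2))).symm
      rw [hft, hsplit, hintgτ τ hτ0.le le_rfl,
        hintgright t (not_le.mp hcase) ht.2]
  · -- constraint
    have h1 : (∫ t in τ..1, Real.exp (f t))
        = ∫ t in τ..1, Real.exp (Finv (c * τ)) * Real.exp (φ ((t - τ)/(1 - τ))) := by
      apply intervalIntegral.integral_congr_ae
      apply Filter.Eventually.of_forall
      intro s hs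
      rw [uIoc_of_le hτ1.le] at hs
      have : f s = Finv (c * τ) + φ ((s - τ)/(1 - τ)) := by
        simp [hfdef, not_le.mpr hs.1]
      rw [this, Real.exp_add]
    have h2 : (∫ t in τ..1, Real.exp (φ ((t - τ)/(1 - τ))))
        = (1 - τ) * ∫ u in (0:ℝ)..1, Real.exp (φ u) := by
      have := LV.intaff1 (fun u => Real.exp (φ u)) hτ1 1
      rw [this, div_self h1τ']
    have hf1 : f 1 = Finv (c * τ) + φ 1 := by
      have h3 : ¬ ((1:ℝ) ≤ τ) := not_le.mpr hτ1
      have h4 : (1 - τ)/(1 - τ) = 1 := div_self h1τ'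
      simp only [hfdef, if_neg h3, h4]
    rw [h1, intervalIntegral.integral_const_mul, h2, hcons, hf1, Real.exp_add]
    field_simp
  · -- energy
    have hsplit : (∫ t in (0:ℝ)..1, (g t / σ (S₀ * Real.exp (f t)))^2)
        = (∫ t in (0:ℝ)..τ, (g t / σ (S₀ * Real.exp (f t)))^2)
          + ∫ t in τ..1, (g t / σ (S₀ * Real.exp (f t)))^2 :=
      (intervalIntegral.integral_add_adjacent_intervals hQl hQr).symm
    have hl : (∫ t in (0:ℝ)..τ, (g t / σ (S₀ * Real.exp (f t)))^2) = c^2 * τ := by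
      have h1 : (∫ t in (0:ℝ)..τ, (g t / σ (S₀ * Real.exp (f t)))^2)
          = ∫ t in (0:ℝ)..τ, c^2 := by
        apply intervalIntegral.integral_congr
        intro s hs
        rw [uIcc_of_le hτ0.le] at hs
        exact hfleft s hs.2
      rw [h1, intervalIntegral.integral_const, smul_eq_mul, sub_zero, mul_comm]
    have hr : (∫ t in τ..1, (g t / σ (S₀ * Real.exp (f t)))^2)
        = (∫ u in (0:ℝ)..1, (gφ u / σ (x * Real.exp (φ u)))^2) / (1 - τ) := by
      have h1 : (∫ t in τ..1, (g t / σ (S₀ * Real.exp (f t)))^2)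
          = ∫ t in τ..1,
              (gφ ((t - τ)/(1 - τ)) / σ (x * Real.exp (φ ((t - τ)/(1 - τ)))))^2 / (1 - τ)^2 := by
        apply intervalIntegral.integral_congr_ae
        apply Filter.Eventually.of_forall
        intro s hs
        rw [uIoc_of_le hτ1.le] at hs
        exact hfright s (not_le.mpr hs.1)
      rw [h1, intervalIntegral.integral_div]
      have h2 := LV.intaff1 (fun u => (gφ u / σ (x * Real.exp (φ u)))^2) hτ1 1
      rw [div_self h1τ'] at h2
      rw [h2]
      field_simp
    simp only [energyLV]
    rw [hsplit, hl, hr]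
    field_simp


lemma LV.decompose
    {σ : ℝ → ℝ} {σlo σhi : ℝ}
    (hcont : ContinuousOn σ (Ici 0)) (hσlo : 0 < σlo)
    (hbdd : ∀ x : ℝ, 0 ≤ x → σlo ≤ σ x ∧ σ x ≤ σhi)
    {S₀ κ τ : ℝ} (hS₀ : 0 < S₀) (hκ : 0 < κ) (hτ : τ ∈ Ioo (0:ℝ) 1)
    (F Finv : ℝ → ℝ)
    (hF : ∀ y : ℝ, F y = ∫ z in (0:ℝ)..y, 1 / σ (S₀ * Real.exp z))
    (hFmono : StrictMono F)
    (hLeft : Function.LeftInverse Finv F)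
    (hRight : Function.RightInverse Finv F)
    {f g : ℝ → ℝ} (hf : IsACLV σ S₀ f g)
    (hcons : (1 / (1 - τ)) * (∫ t in τ..1, Real.exp (f t)) = κ * Real.exp (f 1)) :
    ∃ c : ℝ, ∃ φ gφ : ℝ → ℝ,
      IsACLV σ (S₀ * Real.exp (Finv (c * τ))) φ gφ ∧
      (∫ u in (0:ℝ)..1, Real.exp (φ u)) = κ * Real.exp (φ 1) ∧
      (1/2) * c^2 * τ + (1/(1-τ)) * energyLV σ (S₀ * Real.exp (Finv (c * τ))) φ gφ
        ≤ energyLV σ S₀ f g := by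
  obtain ⟨hτ0, hτ1⟩ := hτ
  have h1τ : (0:ℝ) < 1 - τ := by linarith
  have h1τ' : (1:ℝ) - τ ≠ 0 := ne_of_gt h1τ
  set ν : ℝ → ℝ := fun z => σ (S₀ * Real.exp z) with hνdef
  have hνcont : Continuous ν := LV.cont hcont hS₀
  have hνpos : ∀ z, 0 < ν z := fun z =>
    lt_of_lt_of_le hσlo (hbdd _ (by positivity)).1
  set c : ℝ := F (f τ) / τ with hcdef
  have hcτ : c * τ = F (f τ) := div_mul_cancel₀ _ hτ0.ne'
  have hxfτ : Finv (c * τ) = f τ := by rw [hcτ]; exact hLeft (f τ)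
  set x : ℝ := S₀ * Real.exp (Finv (c * τ)) with hxdef
  have hxe : x = S₀ * Real.exp (f τ) := by rw [hxdef, hxfτ]
  set φ : ℝ → ℝ := fun u => f (τ + (1 - τ) * u) - f τ with hφdef
  set gφ : ℝ → ℝ := fun u => (1 - τ) * g (τ + (1 - τ) * u) with hgφdef
  -- pointwise identity for the squared integrand
  have hptw : ∀ u : ℝ, (gφ u / σ (x * Real.exp (φ u)))^2
      = (1 - τ)^2 * (g (τ + (1 - τ) * u) / σ (S₀ * Real.exp (f (τ + (1 - τ) * u))))^2 := by
    intro u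
    have hxeφ : x * Real.exp (φ u) = S₀ * Real.exp (f (τ + (1 - τ) * u)) := by
      rw [hxe, hφdef]
      show S₀ * Real.exp (f τ) * Real.exp (f (τ + (1 - τ) * u) - f τ) = _
      rw [mul_assoc, ← Real.exp_add, add_sub_cancel]
    rw [hxeφ]
    show ((1 - τ) * g (τ + (1 - τ) * u) / σ (S₀ * Real.exp (f (τ + (1 - τ) * u))))^2 = _
    rw [mul_div_assoc, mul_pow]
  -- integrability pieces
  have hsub01 : Set.uIcc τ (1:ℝ) ⊆ Set.uIcc (0:ℝ) 1 := by
    rw [Set.uIcc_of_le hτ1.le, Set.uIcc_of_le zero_le_one]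
    exact Icc_subset_Icc hτ0.le le_rfl
  have hsub0τ : Set.uIcc (0:ℝ) τ ⊆ Set.uIcc (0:ℝ) 1 := by
    rw [Set.uIcc_of_le hτ0.le, Set.uIcc_of_le zero_le_one]
    exact Icc_subset_Icc le_rfl hτ1.le
  have hgτ1 : IntervalIntegrable g volume τ 1 := hf.1.mono_set hsub01
  have hg0τ : IntervalIntegrable g volume 0 τ := hf.1.mono_set hsub0τ
  have hQ : IntervalIntegrable (fun t => (g t / σ (S₀ * Real.exp (f t)))^2) volume 0 1 :=
    hf.2.1
  have hQτ1 : IntervalIntegrable (fun t => (g t / σ (S₀ * Real.exp (f t)))^2) volume τ 1 :=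
    hQ.mono_set hsub01
  have hQ0τ : IntervalIntegrable (fun t => (g t / σ (S₀ * Real.exp (f t)))^2) volume 0 τ :=
    hQ.mono_set hsub0τ
  have hgφint : IntervalIntegrable gφ volume 0 1 := by
    have := (LV.II_affine2 hτ1 hgτ1).const_mul (1 - τ)
    exact this
  have hQφ : IntervalIntegrable (fun u => (gφ u / σ (x * Real.exp (φ u)))^2) volume 0 1 := by
    have h1 : (fun u => (gφ u / σ (x * Real.exp (φ u)))^2)
        = fun u => (1 - τ)^2 * (g (τ + (1 - τ) * u) / σ (S₀ * Real.exp (f (τ + (1 - τ) * u))))^2 :=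
      funext hptw
    rw [h1]
    exact (LV.II_affine2 hτ1 hQτ1).const_mul ((1 - τ)^2)
  -- the AC property of φ
  have htu : ∀ u : ℝ, u ∈ Icc (0:ℝ) 1 → (τ + (1 - τ) * u) ∈ Icc (0:ℝ) 1 := by
    intro u hu
    constructor
    · nlinarith [hu.1, hu.2]
    · nlinarith [hu.1, hu.2]
  have hφAC : ∀ u ∈ Icc (0:ℝ) 1, φ u = ∫ s in (0:ℝ)..u, gφ s := by
    intro u hu
    have htumem := htu u hu
    have hτtu : IntervalIntegrable g volume τ (τ + (1 - τ) * u) := by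
      apply hf.1.mono_set
      rw [Set.uIcc_of_le (by nlinarith [hu.1] : τ ≤ τ + (1 - τ) * u), Set.uIcc_of_le zero_le_one]
      exact Icc_subset_Icc hτ0.le htumem.2
    have hadj : (∫ s in (0:ℝ)..τ, g s) + (∫ s in τ..(τ + (1 - τ) * u), g s)
        = ∫ s in (0:ℝ)..(τ + (1 - τ) * u), g s :=
      intervalIntegral.integral_add_adjacent_intervals hg0τ hτtu
    have h2 : (∫ s in (0:ℝ)..u, gφ s) = (1 - τ) * ∫ s in (0:ℝ)..u, g (τ + (1 - τ) * s) := by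
      rw [hgφdef]
      exact intervalIntegral.integral_const_mul _ _
    rw [h2, LV.intaff2 g hτ1 u]
    rw [hφdef]
    show f (τ + (1 - τ) * u) - f τ = (1 - τ) * ((1 - τ)⁻¹ * ∫ s in τ..(τ + (1 - τ) * u), g s)
    rw [← mul_assoc, mul_inv_cancel₀ h1τ', one_mul]
    rw [hf.2.2 _ htumem, hf.2.2 τ ⟨hτ0.le, hτ1.le⟩]
    linarith [hadj]
  -- the constraint for φ
  have harg1 : τ + (1 - τ) * 1 = 1 := by ring
  have hφ1 : φ 1 = f 1 - f τ := by rw [hφdef]; show f (τ + (1-τ)*1) - f τ = _; rw [harg1]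
  have hconsφ : (∫ u in (0:ℝ)..1, Real.exp (φ u)) = κ * Real.exp (φ 1) := by
    have h1 : (fun u => Real.exp (φ u))
        = fun u => Real.exp (f (τ + (1 - τ) * u)) * Real.exp (-(f τ)) := by
      funext u
      rw [hφdef]
      show Real.exp (f (τ + (1-τ)*u) - f τ) = _
      rw [← Real.exp_add]
      ring_nf
    rw [h1]
    rw [intervalIntegral.integral_mul_const, LV.intaff2 (fun t => Real.exp (f t)) hτ1 1, harg1]
    rw [hφ1, Real.exp_sub]
    have hI : (∫ t in τ..1, Real.exp (f t)) = (1 - τ) * (κ * Real.exp (f 1)) := by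
      rw [← hcons]; field_simp
    rw [hI, Real.exp_neg]
    field_simp [Real.exp_ne_zero]
  -- energy comparison
  have hEφ : (∫ u in (0:ℝ)..1, (gφ u / σ (x * Real.exp (φ u)))^2)
      = (1 - τ) * ∫ t in τ..1, (g t / σ (S₀ * Real.exp (f t)))^2 := by
    have h1 : (fun u => (gφ u / σ (x * Real.exp (φ u)))^2)
        = fun u => (1 - τ)^2 * (g (τ + (1 - τ) * u) / σ (S₀ * Real.exp (f (τ + (1 - τ) * u))))^2 :=
      funext hptw
    rw [h1, intervalIntegral.integral_const_mul,
      LV.intaff2 (fun t => (g t / σ (S₀ * Real.exp (f t)))^2) hτ1 1, harg1]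
    field_simp
  -- Cauchy-Schwarz lower bound on [0,τ]
  have hfcOn : ContinuousOn f (Icc 0 1) := by
    have hgIcc : IntegrableOn g (uIcc (0:ℝ) 1) volume := by
      rw [Set.uIcc_of_le zero_le_one]
      exact (intervalIntegrable_iff_integrableOn_Icc_of_le zero_le_one).mp hf.1
    have hP : ContinuousOn (fun t => ∫ s in (0:ℝ)..t, g s) (uIcc (0:ℝ) 1) :=
      intervalIntegral.continuousOn_primitive_interval hgIcc
    rw [Set.uIcc_of_le zero_le_one] at hP
    exact hP.congr (fun t ht => hf.2.2 t ht)
  have hwint : IntervalIntegrable (fun s => g s / σ (S₀ * Real.exp (f s))) volume 0 τ := by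
    have hψfc : ContinuousOn (fun s => (σ (S₀ * Real.exp (f s)))⁻¹) (uIcc (0:ℝ) τ) := by
      apply ContinuousOn.inv₀
      · apply Continuous.comp_continuousOn hνcont
        apply hfcOn.mono
        rw [Set.uIcc_of_le hτ0.le]
        exact Icc_subset_Icc le_rfl hτ1.le
      · intro s _
        exact (hνpos (f s)).ne'
    have := hg0τ.mul_continuousOn hψfc
    have heq : (fun s => g s * (σ (S₀ * Real.exp (f s)))⁻¹)
        = fun s => g s / σ (S₀ * Real.exp (f s)) := by
      funext s; rw [div_eq_mul_inv]
    rwa [heq] at this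
  have hkey : (∫ s in (0:ℝ)..τ, g s / σ (S₀ * Real.exp (f s))) = F (f τ) := by
    have hσhipos : 0 < σhi := lt_of_lt_of_le hσlo (le_trans (hbdd S₀ hS₀.le).1 (hbdd S₀ hS₀.le).2)
    have hkl := LV.key_identity (g := g) (ψ := fun z => 1 / ν z) (C := 1/σlo) hτ0
      (one_div_pos.mpr hσlo) hg0τ
      (continuous_const.div hνcont fun z => (hνpos z).ne')
      (fun z => by
        rw [abs_of_pos (one_div_pos.mpr (hνpos z))]
        apply one_div_le_one_div_of_le hσlo
        exact (hbdd _ (mul_pos hS₀ (Real.exp_pos z)).le).1)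
      (F := F) (fun y => hF y)
    have hcongr : (∫ s in (0:ℝ)..τ, g s / σ (S₀ * Real.exp (f s)))
        = ∫ s in (0:ℝ)..τ, (1 / ν (∫ x in (0:ℝ)..s, g x)) * g s := by
      apply intervalIntegral.integral_congr
      intro s hs
      rw [Set.uIcc_of_le hτ0.le] at hs
      have hs01 : s ∈ Icc (0:ℝ) 1 := ⟨hs.1, le_trans hs.2 hτ1.le⟩
      show g s / σ (S₀ * Real.exp (f s)) = (1 / ν (∫ x in (0:ℝ)..s, g x)) * g s
      rw [← hf.2.2 s hs01, one_div, inv_mul_eq_div]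
    rw [hcongr, hkl, ← hf.2.2 τ ⟨hτ0.le, hτ1.le⟩]
  have hCS : (F (f τ))^2 ≤ τ * ∫ s in (0:ℝ)..τ, (g s / σ (S₀ * Real.exp (f s)))^2 := by
    have := LV.sq_integral_le hτ0 hwint hQ0τ
    rwa [hkey] at this
  have hlow : c^2 * τ ≤ ∫ s in (0:ℝ)..τ, (g s / σ (S₀ * Real.exp (f s)))^2 := by
    have hc2 : c^2 * τ^2 = (F (f τ))^2 := by
      rw [← hcτ]; ring
    nlinarith [hCS, hτ0]
  -- split the energy of f
  have hsplitE : (∫ t in (0:ℝ)..1, (g t / σ (S₀ * Real.exp (f t)))^2)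
      = (∫ t in (0:ℝ)..τ, (g t / σ (S₀ * Real.exp (f t)))^2)
        + ∫ t in τ..1, (g t / σ (S₀ * Real.exp (f t)))^2 :=
    (intervalIntegral.integral_add_adjacent_intervals hQ0τ hQτ1).symm
  refine ⟨c, φ, gφ, ⟨hgφint, hQφ, hφAC⟩, hconsφ, ?_⟩
  simp only [energyLV]
  rw [hsplitE, hEφ]
  have h2 : (1/(1-τ)) * ((1/2) * ((1 - τ) * ∫ t in τ..1, (g t / σ (S₀ * Real.exp (f t)))^2))
      = (1/2) * ∫ t in τ..1, (g t / σ (S₀ * Real.exp (f t)))^2 := by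
    field_simp
  rw [h2]
  nlinarith [hlow]


/-- Under the local volatility assumptions (continuity, uniform
ellipticity `0 < σ̲ ≤ σ ≤ σ̄ < ∞` on `[0,∞)`, and Hölder continuity of `σ ∘ exp`),
for `S₀, κ > 0` and `τ ∈ (0,1)`,
`I_f(S₀, κ, τ) = inf_{c ∈ ℝ} { (1/2)c²τ + (1/(1−τ))·I_float(S₀·exp(F⁻¹(cτ)), κ) }`,
where `F(y) = ∫₀^y dz/σ(S₀·e^z)` is a strictly increasing bijection of `ℝ` with
(two-sided) inverse `F⁻¹ = Finv`. -/
theorem Ifloatfwd_double_layer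
    (σ : ℝ → ℝ) (σlo σhi M α : ℝ)
    (hcont : ContinuousOn σ (Ici 0))
    (hσlo : 0 < σlo)
    (hbdd : ∀ x : ℝ, 0 ≤ x → σlo ≤ σ x ∧ σ x ≤ σhi)
    (hM : 0 < M) (hα : 0 < α)
    (hHolder : ∀ x y : ℝ, |σ (Real.exp x) - σ (Real.exp y)| ≤ M * |x - y| ^ α)
    (S₀ κ τ : ℝ) (hS₀ : 0 < S₀) (hκ : 0 < κ) (hτ : τ ∈ Ioo (0:ℝ) 1)
    (F Finv : ℝ → ℝ)
    (hF : ∀ y : ℝ, F y = ∫ z in (0:ℝ)..y, 1 / σ (S₀ * Real.exp z))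
    (hFmono : StrictMono F)
    (hLeft : Function.LeftInverse Finv F)
    (hRight : Function.RightInverse Finv F) :
    Ifloatfwd σ S₀ κ τ =
      ⨅ c : ℝ, ((1 / 2) * c ^ 2 * τ
        + (1 / (1 - τ)) * Ifloat σ (S₀ * Real.exp (Finv (c * τ))) κ) := by
  obtain ⟨hτ0, hτ1⟩ := hτ
  have h1τ : (0:ℝ) < 1 - τ := by linarith
  have hk : (0:ℝ) < 1 / (1 - τ) := by positivity
  set S : Set ℝ := { E | ∃ f g : ℝ → ℝ, IsACLV σ S₀ f g ∧
    (1 / (1 - τ)) * (∫ t in τ..1, Real.exp (f t)) = κ * Real.exp (f 1) ∧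
    E = energyLV σ S₀ f g } with hSdef
  have hIfwd : Ifloatfwd σ S₀ κ τ = sInf S := rfl
  have hIfl : ∀ x : ℝ, Ifloat σ x κ = sInf (Ifloat' σ x κ) := fun x => rfl
  have hbdd1 : ∀ x : ℝ, 0 ≤ x → σlo ≤ σ x := fun x hx => (hbdd x hx).1
  have hne_float : ∀ x : ℝ, 0 < x → (Ifloat' σ x κ).Nonempty :=
    fun x hx => LV.linear_mem hcont hσlo hbdd1 hx hκ
  have hbdd_float : ∀ x : ℝ, BddBelow (Ifloat' σ x κ) := by
    intro x
    refine ⟨0, fun E hE => ?_⟩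
    obtain ⟨φ, gφ, _, _, hEeq⟩ := hE
    rw [hEeq]
    exact LV.energy_nonneg σ x φ gφ
  have hfloat_nonneg : ∀ x : ℝ, 0 ≤ Ifloat σ x κ := by
    intro x
    rw [hIfl x]
    apply Real.sInf_nonneg
    intro E hE
    obtain ⟨φ, gφ, _, _, hEeq⟩ := hE
    rw [hEeq]
    exact LV.energy_nonneg σ x φ gφ
  have hxpos : ∀ c : ℝ, 0 < S₀ * Real.exp (Finv (c * τ)) := fun c => by positivity
  have hSbdd : BddBelow S := by
    refine ⟨0, fun E hE => ?_⟩
    obtain ⟨f, g, _, _, hEeq⟩ := hE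
    rw [hEeq]
    exact LV.energy_nonneg σ S₀ f g
  have hτIoo : τ ∈ Ioo (0:ℝ) 1 := ⟨hτ0, hτ1⟩
  have hSne : S.Nonempty := by
    obtain ⟨E₀, φ₀, gφ₀, hφ₀, hc₀, hE₀⟩ := hne_float _ (hxpos 0)
    exact ⟨_, LV.construct_mem hcont hσlo hbdd hS₀ hκ hτIoo F Finv hF hFmono hLeft hRight
      0 hφ₀ hc₀⟩
  have hrange_bdd : BddBelow (Set.range fun c : ℝ =>
      ((1 / 2) * c ^ 2 * τ + (1 / (1 - τ)) * Ifloat σ (S₀ * Real.exp (Finv (c * τ))) κ)) := by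
    refine ⟨0, fun y hy => ?_⟩
    obtain ⟨c, rfl⟩ := hy
    have h1 : 0 ≤ (1/2) * c^2 * τ := by positivity
    have h2 := hfloat_nonneg (S₀ * Real.exp (Finv (c * τ)))
    nlinarith [hk]
  rw [hIfwd]
  apply le_antisymm
  · -- sInf S ≤ iInf
    apply le_ciInf
    intro c
    set x : ℝ := S₀ * Real.exp (Finv (c * τ)) with hxdef
    set A : ℝ := (1/2) * c^2 * τ with hAdef
    have key : ∀ E ∈ Ifloat' σ x κ, sInf S ≤ A + (1 / (1 - τ)) * E := by
      intro E hE
      obtain ⟨φ, gφ, hφ, hco, hEeq⟩ := hE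
      rw [hEeq]
      exact csInf_le hSbdd (LV.construct_mem hcont hσlo hbdd hS₀ hκ hτIoo F Finv hF
        hFmono hLeft hRight c hφ hco)
    have h2 : (sInf S - A) / (1 / (1 - τ)) ≤ sInf (Ifloat' σ x κ) := by
      apply le_csInf (hne_float x (hxpos c))
      intro E hE
      rw [div_le_iff₀ hk]
      have := key E hE
      linarith
    rw [div_le_iff₀ hk] at h2
    rw [hIfl x]
    have : (1 / (1 - τ)) * sInf (Ifloat' σ x κ) = sInf (Ifloat' σ x κ) * (1 / (1 - τ)) :=
      mul_comm _ _
    show sInf S ≤ (1/2) * c^2 * τ + (1 / (1 - τ)) * sInf (Ifloat' σ x κ)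
    rw [← hAdef, this]
    linarith
  · -- iInf ≤ sInf S
    apply le_csInf hSne
    intro E hE
    obtain ⟨f, g, hf, hco, hEeq⟩ := hE
    obtain ⟨c, φ, gφ, hφ, hcoφ, hineq⟩ := LV.decompose hcont hσlo hbdd hS₀ hκ hτIoo
      F Finv hF hFmono hLeft hRight hf hco
    have h1 : (⨅ c : ℝ, ((1 / 2) * c ^ 2 * τ
        + (1 / (1 - τ)) * Ifloat σ (S₀ * Real.exp (Finv (c * τ))) κ))
        ≤ (1 / 2) * c ^ 2 * τ + (1 / (1 - τ)) * Ifloat σ (S₀ * Real.exp (Finv (c * τ))) κ :=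
      ciInf_le hrange_bdd c
    have h2 : Ifloat σ (S₀ * Real.exp (Finv (c * τ))) κ
        ≤ energyLV σ (S₀ * Real.exp (Finv (c * τ))) φ gφ := by
      rw [hIfl]
      exact csInf_le (hbdd_float _) ⟨φ, gφ, hφ, hcoφ, rfl⟩
    have h3 : (1 / (1 - τ)) * Ifloat σ (S₀ * Real.exp (Finv (c * τ))) κ
        ≤ (1 / (1 - τ)) * energyLV σ (S₀ * Real.exp (Finv (c * τ))) φ gφ :=
      mul_le_mul_of_nonneg_left h2 hk.le
    rw [hEeq]
    linarith
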